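/- Let Γ be a discrete subring of ℂ containing 1 and let (a_n)_{n≥0} be a sequence in Γ \ {0} with |a_n| > 1 for all n ≥ 1. Let (p_n), (q_n) be the corresponding Q-pair and set r_n = q_n/q_{n−1} for n ≥ 1. Then at least one of the following holds: (i) |q_{n+1}| > |q_n| for all n ≥ 0; (ii) there exists m ≥ 1 such that |r_n| > 1 for n = 1, …, m, |r_{m+1}| ≤ 1, |a_{m+1}| < 2, r_m lies in the closed disc of center −ā_{m+1}/(|a_{m+1}|² − 1) and radius 1/(|a_{m+1}|² − 1), and a_m lies in the open disc of center −ā_{m+1}/(|a_{m+1}|² − 1) and radius |a_{m+1}|²/(|a_{m+1}|² − 1). -/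

import Mathlib

/-- The Q-pair of a sequence of partial quotients, with indices shifted by one:
`p (n+1)` is the paper's `p_n` and `q (n+1)` is the paper's `q_n`
(so `p 0 = p_{-1} = 1` and `q 0 = q_{-1} = 0`). -/
def IsQPair (a p q : ℕ → ℂ) : Prop :=
  p 0 = 1 ∧ p 1 = a 0 ∧ (∀ n, p (n + 2) = a (n + 1) * p (n + 1) + p n) ∧
  q 0 = 0 ∧ q 1 = 1 ∧ (∀ n, q (n + 2) = a (n + 1) * q (n + 1) + q n)

lemma disc_aux_stmt15 (a r : ℂ) (ha : 1 < Norm.norm a)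
    (h : Norm.norm (a * r + 1) ≤ Norm.norm r) :
    Norm.norm (r - (-(starRingEnd ℂ) a / ((Norm.norm a ^ 2 - 1 : ℝ) : ℂ)))
      ≤ 1 / (Norm.norm a ^ 2 - 1) := by
  have hd : (0:ℝ) < Norm.norm a ^ 2 - 1 := by nlinarith [norm_nonneg a]
  set d : ℝ := Norm.norm a ^ 2 - 1 with hdd
  have hdc : (d:ℂ) ≠ 0 := by exact_mod_cast hd.ne'
  have hA : Norm.norm a ^ 2 = Complex.normSq a := Complex.sq_norm a
  have h2 : Complex.normSq (a*r+1) ≤ Complex.normSq r := by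
    rw [← Complex.sq_norm, ← Complex.sq_norm]
    exact pow_le_pow_left₀ (norm_nonneg _) h 2
  have key : Norm.norm ((d:ℂ) * r + (starRingEnd ℂ) a) ≤ 1 := by
    have hde : d = a.re^2 + a.im^2 - 1 := by
      rw [hdd, hA]; simp [Complex.normSq_apply]; ring
    have hd' : (0:ℝ) < a.re^2 + a.im^2 - 1 := hde ▸ hd
    have hsq : Complex.normSq ((d:ℂ) * r + (starRingEnd ℂ) a) ≤ 1 := by
      simp only [Complex.normSq_apply, Complex.add_re, Complex.add_im, Complex.mul_re,
        Complex.mul_im, Complex.ofReal_re, Complex.ofReal_im, Complex.conj_re,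
        Complex.conj_im, Complex.one_re, Complex.one_im] at h2 ⊢
      rw [hde]
      nlinarith [mul_nonneg hd'.le (sub_nonneg.2 h2)]
    calc Norm.norm ((d:ℂ) * r + (starRingEnd ℂ) a)
        = Real.sqrt (Complex.normSq ((d:ℂ) * r + (starRingEnd ℂ) a)) := Complex.norm_def _
      _ ≤ Real.sqrt 1 := Real.sqrt_le_sqrt hsq
      _ = 1 := Real.sqrt_one
  have heq : r - (-(starRingEnd ℂ) a / (d:ℂ)) = ((d:ℂ) * r + (starRingEnd ℂ) a) / (d:ℂ) := by
    field_simp; ring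
  rw [heq, norm_div, Complex.norm_real, Real.norm_eq_abs, abs_of_pos hd]
  gcongr

/-- Corollary 5.3: for a sequence `(a n)` in `Γ \ {0}` with `|a n| > 1` for `n ≥ 1`,
with Q-pair `(p n), (q n)` and ratios `r_n = q_n/q_{n-1}`, either `|q_{n+1}| > |q_n|`
for all `n ≥ 0`, or there is `m ≥ 1` with `|r_n| > 1` for `n = 1,…,m`, `|r_{m+1}| ≤ 1`,
`|a_{m+1}| < 2`, `r_m ∈ B̄(-ā_{m+1}/(|a_{m+1}|²-1), 1/(|a_{m+1}|²-1))` and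
`a m ∈ B(-ā_{m+1}/(|a_{m+1}|²-1), |a_{m+1}|²/(|a_{m+1}|²-1))`.
(Indices of `p`, `q` are shifted by one, so `q (n+1)/q n` is the paper's `r_n`.) -/
theorem stmt_15 (Γ : Subring ℂ) (hdisc : DiscreteTopology Γ)
    (a : ℕ → ℂ) (haΓ : ∀ n, a n ∈ Γ) (ha0 : ∀ n, a n ≠ 0)
    (ha1 : ∀ n, 1 ≤ n → 1 < Norm.norm (a n))
    (p q : ℕ → ℂ) (hpq : IsQPair a p q) :
    (∀ n : ℕ, Norm.norm (q (n + 1)) < Norm.norm (q (n + 2)))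
    ∨ (∃ m : ℕ, 1 ≤ m ∧
        (∀ n : ℕ, 1 ≤ n → n ≤ m → 1 < Norm.norm (q (n + 1) / q n)) ∧
        Norm.norm (q (m + 2) / q (m + 1)) ≤ 1 ∧
        Norm.norm (a (m + 1)) < 2 ∧
        q (m + 1) / q m ∈ Metric.closedBall
          (-(starRingEnd ℂ) (a (m + 1)) / ((Norm.norm (a (m + 1)) ^ 2 - 1 : ℝ) : ℂ))
          (1 / (Norm.norm (a (m + 1)) ^ 2 - 1)) ∧
        a m ∈ Metric.ball
          (-(starRingEnd ℂ) (a (m + 1)) / ((Norm.norm (a (m + 1)) ^ 2 - 1 : ℝ) : ℂ))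
          (Norm.norm (a (m + 1)) ^ 2 / (Norm.norm (a (m + 1)) ^ 2 - 1))) := by
  obtain ⟨-, -, -, hq0, hq1, hq2⟩ := hpq
  by_cases H : ∀ n : ℕ, Norm.norm (q (n + 1)) < Norm.norm (q (n + 2))
  · exact Or.inl H
  right
  push_neg at H
  have hex : ∃ n, Norm.norm (q (n + 2)) ≤ Norm.norm (q (n + 1)) := H
  classical
  obtain ⟨m, hmle, hmin⟩ : ∃ m, Norm.norm (q (m + 2)) ≤ Norm.norm (q (m + 1)) ∧
      ∀ k, k < m → Norm.norm (q (k + 1)) < Norm.norm (q (k + 2)) :=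
    ⟨Nat.find hex, Nat.find_spec hex, fun k hk => lt_of_not_ge (Nat.find_min hex hk)⟩
  have hq2v : q 2 = a 1 := by
    have := hq2 0; rw [hq0, hq1] at this; simpa using this
  have hm1 : 1 ≤ m := by
    by_contra hm
    have hm0 : m = 0 := by omega
    rw [hm0] at hmle
    rw [show (0:ℕ)+2 = 2 from rfl, show (0:ℕ)+1 = 1 from rfl, hq2v, hq1] at hmle
    simp at hmle
    exact absurd hmle (not_le.mpr (ha1 1 le_rfl))
  -- chain of strict growth
  have chain : ∀ k, k ≤ m → Norm.norm (q k) < Norm.norm (q (k + 1)) := by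
    intro k hk
    match k with
    | 0 => rw [hq0, hq1]; simp
    | Nat.succ k => exact hmin k (by omega)
  have hq1le : ∀ k, 1 ≤ k → k ≤ m + 1 → 1 ≤ Norm.norm (q k) := by
    intro k hk1 hk2
    induction k with
    | zero => omega
    | succ n ih =>
      rcases Nat.eq_zero_or_pos n with h | h
      · subst h; rw [hq1]; simp
      · have := chain n (by omega)
        have := ih (by omega) (by omega)
        linarith
  have hqne : ∀ k, 1 ≤ k → k ≤ m + 1 → q k ≠ 0 := by
    intro k h1 h2
    intro hz
    have := hq1le k h1 h2
    rw [hz] at this; simp at this; linarith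
  have hqm : q m ≠ 0 := hqne m hm1 (by omega)
  have hqm1 : q (m+1) ≠ 0 := hqne (m+1) (by omega) le_rfl
  have hqmpos : 0 < Norm.norm (q m) := by
    have := hq1le m hm1 (by omega); linarith
  have hqm1pos : 0 < Norm.norm (q (m+1)) := by
    have := hq1le (m+1) (by omega) le_rfl; linarith
  have ha : 1 < Norm.norm (a (m+1)) := ha1 (m+1) (by omega)
  have hd : (0:ℝ) < Norm.norm (a (m+1)) ^ 2 - 1 := by
    nlinarith [norm_nonneg (a (m+1))]
  -- key inequality |a r + 1| ≤ |r|
  have hrel : a (m+1) * (q (m+1) / q m) + 1 = q (m+2) / q m := by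
    rw [hq2 m]; field_simp
  have hkey : Norm.norm (a (m+1) * (q (m+1) / q m) + 1)
      ≤ Norm.norm (q (m+1) / q m) := by
    rw [hrel, norm_div, norm_div]
    gcongr
  have hball := disc_aux_stmt15 (a (m+1)) (q (m+1) / q m) ha hkey
  refine ⟨m, hm1, ?_, ?_, ?_, ?_, ?_⟩
  · intro n hn1 hnm
    rw [norm_div]
    rw [one_lt_div (lt_of_lt_of_le (by norm_num) (hq1le n hn1 (by omega)))]
    exact chain n (by omega)
  · rw [norm_div]
    rw [div_le_one hqm1pos]
    exact hmle
  · -- |a (m+1)| < 2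
    have e : a (m+1) = q (m+2)/q (m+1) - q m / q (m+1) := by
      rw [hq2 m]; field_simp; ring
    have h1 : Norm.norm (q (m+2)/q (m+1)) ≤ 1 := by
      rw [norm_div, div_le_one hqm1pos]; exact hmle
    have h2 : Norm.norm (q m / q (m+1)) < 1 := by
      rw [norm_div, div_lt_one hqm1pos]; exact chain m le_rfl
    calc Norm.norm (a (m+1))
        ≤ Norm.norm (q (m+2)/q (m+1)) + Norm.norm (q m / q (m+1)) := by
          rw [e]
          exact norm_sub_le (q (m+2)/q (m+1)) (q m / q (m+1))
      _ < 2 := by linarith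
  · rw [Metric.mem_closedBall, Complex.dist_eq]
    exact hball
  · rw [Metric.mem_ball, Complex.dist_eq]
    obtain ⟨k, rfl⟩ : ∃ k, m = k + 1 := ⟨m - 1, by omega⟩
    have hrel2 : a (k+1) - q (k+2)/q (k+1) = -(q k / q (k+1)) := by
      rw [hq2 k]; field_simp; ring
    have h3 : Norm.norm (a (k+1) - q (k+2)/q (k+1)) < 1 := by
      rw [hrel2, norm_neg, norm_div, div_lt_one (by
        have := hq1le (k+1) (by omega) (by omega); linarith)]
      exact chain k (by omega)
    have htri : Norm.norm (a (k+1) - (-(starRingEnd ℂ) (a (k+1+1))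
          / ((Norm.norm (a (k+1+1)) ^ 2 - 1 : ℝ) : ℂ)))
        ≤ Norm.norm (a (k+1) - q (k+2)/q (k+1))
          + Norm.norm (q (k+2)/q (k+1) - (-(starRingEnd ℂ) (a (k+1+1))
          / ((Norm.norm (a (k+1+1)) ^ 2 - 1 : ℝ) : ℂ))) :=
      norm_sub_le_norm_sub_add_norm_sub _ _ _
    calc Norm.norm (a (k+1) - (-(starRingEnd ℂ) (a (k+1+1))
          / ((Norm.norm (a (k+1+1)) ^ 2 - 1 : ℝ) : ℂ)))
        ≤ _ := htri
      _ < 1 + 1 / (Norm.norm (a (k+1+1)) ^ 2 - 1) := add_lt_add_of_lt_of_le h3 hball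
      _ = Norm.norm (a (k+1+1)) ^ 2 / (Norm.norm (a (k+1+1)) ^ 2 - 1) := by
          field_simp; ring
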